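/- arXiv:1509.05009 — 4 statements merged into one kernel-verified Lean document; each statement's English description precedes it below -/
import Mathlib

section
/- Let M,N ∈ ℕ and consider the mapping x ↦ U(x) := A(x)·D(x)·B(x)ᵀ ∈ ℝ^{M×M}, where A(x), B(x) ∈ ℝ^{M×N} hold the first MN and next MN entries of x ∈ ℝ^{2MN+N}, and D(x) ∈ ℝ^{N×N} is diagonal with the last N entries of x on its diagonal. Then the set of points x for which rank(U(x)) ≠ min{M,N} has Lebesgue measure zero. -/
open MeasureTheory

open MvPolynomial Matrix in
/-- The zero set of a multivariate polynomial over `ℝ` (in `Fin n` variables) that does not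
vanish identically has Lebesgue measure zero. -/
lemma aux_poly_null_fin : ∀ (n : ℕ) (p : MvPolynomial (Fin n) ℝ) (x₀ : Fin n → ℝ),
    MvPolynomial.eval x₀ p ≠ 0 → volume {x : Fin n → ℝ | MvPolynomial.eval x p = 0} = 0 := by
  intro n
  induction n with
  | zero =>
    intro p x₀ h
    convert measure_empty (μ := (volume : Measure (Fin 0 → ℝ)))
    ext x
    simp only [Set.mem_setOf_eq, Set.mem_empty_iff_false, iff_false]
    rwa [Subsingleton.elim x x₀]
  | succ n ih =>
    intro p x₀ h
    set q := finSuccEquiv ℝ n p with hq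
    -- nonzero coefficient
    have h0 : Polynomial.eval (x₀ 0) (q.map (MvPolynomial.eval (Fin.tail x₀))) ≠ 0 := by
      rw [← MvPolynomial.eval_eq_eval_mv_eval', Fin.cons_self_tail]
      exact h
    have hq0 : q.map (MvPolynomial.eval (Fin.tail x₀)) ≠ 0 := fun hz => h0 (by rw [hz]; simp)
    obtain ⟨k, hk⟩ : ∃ k, (q.map (MvPolynomial.eval (Fin.tail x₀))).coeff k ≠ 0 := by
      by_contra hc
      push_neg at hc
      exact hq0 (Polynomial.ext fun k => by simpa using hc k)
    rw [Polynomial.coeff_map] at hk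
    -- the slice set
    set T : Set ((Fin n → ℝ) × ℝ) :=
      {y | Polynomial.eval y.2 (q.map (MvPolynomial.eval y.1)) = 0} with hT
    have hTmeas : MeasurableSet T := by
      have hc : Continuous fun y : (Fin n → ℝ) × ℝ =>
          MvPolynomial.eval (Fin.cons y.2 y.1 : Fin (n+1) → ℝ) p := by
        apply (MvPolynomial.continuous_eval p).comp
        apply continuous_pi
        intro i
        refine Fin.cases ?_ ?_ i
        · simpa using continuous_snd
        · intro j
          simpa [Function.comp_def] using (continuous_apply j).comp continuous_fst
      have : T = (fun y : (Fin n → ℝ) × ℝ =>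
          MvPolynomial.eval (Fin.cons y.2 y.1 : Fin (n+1) → ℝ) p) ⁻¹' {0} := by
        ext y
        simp [hT, hq, MvPolynomial.eval_eq_eval_mv_eval']
      rw [this]
      exact hc.measurable (measurableSet_singleton 0)
    have hTnull : (volume : Measure ((Fin n → ℝ) × ℝ)) T = 0 := by
      rw [Measure.volume_eq_prod, Measure.measure_prod_null hTmeas]
      have hS := ih (q.coeff k) (Fin.tail x₀) hk
      rw [measure_eq_zero_iff_ae_notMem] at hS
      filter_upwards [hS] with s hs
      have hqs : q.map (MvPolynomial.eval s) ≠ 0 := by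
        intro hz
        apply hs
        have := congrArg (fun r => Polynomial.coeff r k) hz
        simpa [Polynomial.coeff_map] using this
      have : Prod.mk s ⁻¹' T = {a : ℝ | Polynomial.IsRoot (q.map (MvPolynomial.eval s)) a} := by
        ext a; simp [hT, Polynomial.IsRoot]
      rw [this]
      exact Set.Finite.measure_zero (Polynomial.finite_setOf_isRoot hqs) volume
    -- transfer via measure preserving maps
    have e := MeasureTheory.volume_preserving_piFinSuccAbove (fun _ : Fin (n+1) => ℝ) 0
    have hswap : MeasurePreserving (Prod.swap : ℝ × (Fin n → ℝ) → (Fin n → ℝ) × ℝ)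
        volume volume := by
      rw [Measure.volume_eq_prod, Measure.volume_eq_prod]
      exact Measure.measurePreserving_swap
    have key : {x : Fin (n+1) → ℝ | MvPolynomial.eval x p = 0} =
        (MeasurableEquiv.piFinSuccAbove (fun _ : Fin (n+1) => ℝ) 0) ⁻¹'
          (Prod.swap ⁻¹' T) := by
      ext x
      simp only [Set.mem_setOf_eq, Set.mem_preimage, MeasurableEquiv.piFinSuccAbove,
        MeasurableEquiv.coe_mk, hT, Fin.insertNthEquiv, Equiv.coe_fn_symm_mk,
        Fin.removeNth_zero, Prod.swap]
      rw [← MvPolynomial.eval_eq_eval_mv_eval', Fin.cons_self_tail]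
    rw [key, e.measure_preimage, hswap.measure_preimage]
    · exact hTnull
    · exact hTmeas.nullMeasurableSet
    · exact (hTmeas.preimage measurable_swap).nullMeasurableSet

open MvPolynomial Matrix in
/-- The zero set of a non-identically-vanishing multivariate polynomial over `ℝ`,
indexed by any finite type, has Lebesgue measure zero. -/
lemma aux_poly_null {ι : Type*} [Fintype ι] (p : MvPolynomial ι ℝ) (x₀ : ι → ℝ)
    (h : MvPolynomial.eval x₀ p ≠ 0) :
    volume {x : ι → ℝ | MvPolynomial.eval x p = 0} = 0 := by
  classical
  set n := Fintype.card ι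
  set e : Fin n ≃ ι := (Fintype.equivFin ι).symm with he
  have hmp := MeasureTheory.volume_measurePreserving_piCongrLeft (fun _ : ι => ℝ) e
  set q : MvPolynomial (Fin n) ℝ := rename e.symm p with hqdef
  have hev : ∀ y : Fin n → ℝ,
      MvPolynomial.eval ((MeasurableEquiv.piCongrLeft (fun _ : ι => ℝ) e) y) p =
        MvPolynomial.eval y q := by
    intro y
    have h1 : ((MeasurableEquiv.piCongrLeft (fun _ : ι => ℝ) e) y) = y ∘ e.symm := by
      funext i
      rw [MeasurableEquiv.coe_piCongrLeft]
      rw [show i = e (e.symm i) by simp]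
      rw [Equiv.piCongrLeft_apply_apply]
      simp
    rw [h1, hqdef, eval_rename]
  have hq0 : MvPolynomial.eval (x₀ ∘ e) q ≠ 0 := by
    rw [hqdef, eval_rename]
    have : (x₀ ∘ e) ∘ e.symm = x₀ := by funext i; simp
    rw [this]; exact h
  have hfin := aux_poly_null_fin n q (x₀ ∘ e) hq0
  have hpre : (MeasurableEquiv.piCongrLeft (fun _ : ι => ℝ) e) ⁻¹'
      {x : ι → ℝ | MvPolynomial.eval x p = 0} = {y : Fin n → ℝ | MvPolynomial.eval y q = 0} := by
    ext y
    simp only [Set.mem_preimage, Set.mem_setOf_eq, hev]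
  have hZmeas : MeasurableSet {x : ι → ℝ | MvPolynomial.eval x p = 0} :=
    (MvPolynomial.continuous_eval p).measurable (measurableSet_singleton 0)
  rw [← hmp.measure_preimage hZmeas.nullMeasurableSet, hpre]
  exact hfin

/-- The index type for the `2MN + N` coordinates. -/
abbrev sigIdx (M N : ℕ) := (Fin M × Fin N) ⊕ ((Fin M × Fin N) ⊕ Fin N)

noncomputable def matA (M N : ℕ) : Matrix (Fin M) (Fin N) (MvPolynomial (sigIdx M N) ℝ) :=
  Matrix.of fun i j => MvPolynomial.X (.inl (i, j))

noncomputable def matB (M N : ℕ) : Matrix (Fin M) (Fin N) (MvPolynomial (sigIdx M N) ℝ) :=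
  Matrix.of fun i j => MvPolynomial.X (.inr (.inl (i, j)))

noncomputable def vecD (M N : ℕ) : Fin N → MvPolynomial (sigIdx M N) ℝ :=
  fun j => MvPolynomial.X (.inr (.inr j))

open Matrix in
/-- The generic `min M N × min M N` minor of `A · D · Bᵀ`, as a polynomial. -/
noncomputable def detPoly (M N : ℕ) : MvPolynomial (sigIdx M N) ℝ :=
  (((matA M N) * Matrix.diagonal (vecD M N) * (matB M N)ᵀ).submatrix
    (Fin.castLE (min_le_left M N)) (Fin.castLE (min_le_left M N))).det

/-- Flattening map from the structured space to the plain coordinate space. -/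
def packACC (M N : ℕ) (x : (Fin M → Fin N → ℝ) × (Fin M → Fin N → ℝ) × (Fin N → ℝ)) :
    sigIdx M N → ℝ :=
  Sum.elim (fun p => x.1 p.1 p.2) (Sum.elim (fun p => x.2.1 p.1 p.2) (fun j => x.2.2 j))

lemma packACC_measurePreserving (M N : ℕ) :
    MeasurePreserving (packACC M N) volume volume := by
  have hmeas : Measurable (packACC M N) := by
    apply measurable_pi_lambda
    rintro (⟨i, j⟩ | ⟨i, j⟩ | j)
    · exact (measurable_pi_apply j).comp ((measurable_pi_apply i).comp measurable_fst)
    · exact (measurable_pi_apply j).comp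
        ((measurable_pi_apply i).comp (measurable_fst.comp measurable_snd))
    · exact (measurable_pi_apply j).comp (measurable_snd.comp measurable_snd)
  refine ⟨hmeas, ?_⟩
  rw [show (volume : Measure (sigIdx M N → ℝ)) = Measure.pi (fun _ => volume) from rfl]
  refine (Measure.pi_eq fun s hs => ?_).symm
  rw [Measure.map_apply hmeas (MeasurableSet.univ_pi fun i => hs i)]
  have hpre : packACC M N ⁻¹' Set.univ.pi s =
      (Set.univ.pi fun i => Set.univ.pi fun j => s (.inl (i, j))) ×ˢ
      ((Set.univ.pi fun i => Set.univ.pi fun j => s (.inr (.inl (i, j)))) ×ˢ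
       (Set.univ.pi fun j => s (.inr (.inr j)))) := by
    ext x
    simp [packACC, Set.mem_pi, Sum.forall, Prod.forall]
  rw [hpre, Measure.volume_eq_prod, Measure.prod_prod, Measure.volume_eq_prod,
    Measure.prod_prod]
  simp only [volume_pi, Measure.pi_pi]
  rw [Fintype.prod_sum_type]
  congr 1
  · rw [Fintype.prod_prod_type]
  · rw [Fintype.prod_sum_type, Fintype.prod_prod_type]

open Matrix in
lemma eval_detPoly (M N : ℕ)
    (x : (Fin M → Fin N → ℝ) × (Fin M → Fin N → ℝ) × (Fin N → ℝ)) :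
    MvPolynomial.eval (packACC M N x) (detPoly M N) =
      ((Matrix.of x.1 * Matrix.diagonal x.2.2 * (Matrix.of x.2.1)ᵀ).submatrix
        (Fin.castLE (min_le_left M N)) (Fin.castLE (min_le_left M N))).det := by
  set f := (MvPolynomial.eval (packACC M N x) : MvPolynomial (sigIdx M N) ℝ →+* ℝ)
  rw [detPoly, RingHom.map_det, RingHom.mapMatrix_apply, ← Matrix.submatrix_map]
  have hA : (matA M N).map f = Matrix.of x.1 := by
    ext i j; simp [matA, packACC, f]
  have hB : (matB M N).map f = Matrix.of x.2.1 := by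
    ext i j; simp [matB, packACC, f]
  have hd : (fun j => f (vecD M N j)) = x.2.2 := by
    funext j; simp [vecD, packACC, f]
  rw [Matrix.map_mul, Matrix.map_mul, Matrix.transpose_map,
    Matrix.diagonal_map (map_zero f), hA, hB, hd]

open Matrix in
lemma aux_rank_le (M N : ℕ) (A B : Matrix (Fin M) (Fin N) ℝ) (d : Fin N → ℝ) :
    (A * Matrix.diagonal d * Bᵀ).rank ≤ min M N :=
  le_trans (Matrix.rank_mul_le_left _ _)
    (le_trans (Matrix.rank_mul_le_left _ _)
      (le_min (Matrix.rank_le_height A) (Matrix.rank_le_width A)))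

open Matrix in
lemma aux_rank_ge (M N : ℕ) (U : Matrix (Fin M) (Fin M) ℝ)
    (h : (U.submatrix (Fin.castLE (min_le_left M N)) (Fin.castLE (min_le_left M N))).det ≠ 0) :
    min M N ≤ U.rank := by
  set r : Fin (min M N) → Fin M := Fin.castLE (min_le_left M N) with hr
  have hrank : (U.submatrix r r).rank = min M N := by
    rw [Matrix.rank_of_isUnit _ ((Matrix.isUnit_iff_isUnit_det _).mpr (isUnit_iff_ne_zero.mpr h))]
    simp
  have hdecomp : U.submatrix r r =
      ((1 : Matrix (Fin M) (Fin M) ℝ).submatrix r (Equiv.refl (Fin M) : Fin M → Fin M)) *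
        (U * (1 : Matrix (Fin M) (Fin M) ℝ).submatrix (⇑(Equiv.refl (Fin M))) r) := by
    rw [Matrix.mul_submatrix_one, Matrix.one_submatrix_mul]
    simp
  calc min M N = (U.submatrix r r).rank := hrank.symm
    _ ≤ (U * (1 : Matrix (Fin M) (Fin M) ℝ).submatrix (⇑(Equiv.refl (Fin M))) r).rank := by
        rw [hdecomp]; exact Matrix.rank_mul_le_right _ _
    _ ≤ U.rank := Matrix.rank_mul_le_left _ _

open Matrix in
lemma aux_witness (M N : ℕ) :
    ((Matrix.of (fun i j => if (i : ℕ) = (j : ℕ) then (1:ℝ) else 0 : Fin M → Fin N → ℝ) *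
      Matrix.diagonal (fun _ : Fin N => (1:ℝ)) *
      (Matrix.of (fun i j => if (i : ℕ) = (j : ℕ) then (1:ℝ) else 0 : Fin M → Fin N → ℝ))ᵀ).submatrix
        (Fin.castLE (min_le_left M N)) (Fin.castLE (min_le_left M N))).det ≠ 0 := by
  have hw : ((Matrix.of (fun i j => if (i : ℕ) = (j : ℕ) then (1:ℝ) else 0 : Fin M → Fin N → ℝ) *
      Matrix.diagonal (fun _ : Fin N => (1:ℝ)) *
      (Matrix.of (fun i j => if (i : ℕ) = (j : ℕ) then (1:ℝ) else 0 : Fin M → Fin N → ℝ))ᵀ).submatrix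
        (Fin.castLE (min_le_left M N)) (Fin.castLE (min_le_left M N))) = 1 := by
    ext i i'
    rw [Matrix.diagonal_one, Matrix.mul_one, Matrix.submatrix_apply, Matrix.mul_apply]
    rw [Finset.sum_eq_single (Fin.castLE (min_le_right M N) i)]
    · simp only [Matrix.of_apply, Matrix.transpose_apply, Fin.coe_castLE]
      simp only [if_true, one_mul, Matrix.one_apply]
      by_cases h : i = i'
      · subst h; simp
      · rw [if_neg (by simpa [Fin.val_eq_val] using Ne.symm h), if_neg h]
    · intro j _ hj
      rw [Matrix.of_apply, Fin.coe_castLE, if_neg, zero_mul]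
      intro hij
      exact hj (Fin.ext (by simpa using hij.symm))
    · intro hmem
      exact absurd (Finset.mem_univ _) hmem
  rw [hw, Matrix.det_one]
  exact one_ne_zero

/-- For the mapping `x ↦ U(x) := A(x) · D(x) · B(x)ᵀ`, where `A(x), B(x)` are
the `M × N` matrices holding the first and second `M·N` entries of `x` and `D(x)` is the
`N × N` diagonal matrix holding the last `N` entries, the set of points `x` for which
`rank (U x) ≠ min M N` has Lebesgue measure zero. -/
theorem rank_ADBt_eq_min_almost_everywhere (M N : ℕ) :
    volume {x : (Fin M → Fin N → ℝ) × (Fin M → Fin N → ℝ) × (Fin N → ℝ) |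
      (Matrix.of x.1 * Matrix.diagonal x.2.2 * (Matrix.of x.2.1).transpose).rank ≠ min M N} = 0 := by
  classical
  set Z : Set (sigIdx M N → ℝ) := {y | MvPolynomial.eval y (detPoly M N) = 0} with hZ
  have hsub : {x : (Fin M → Fin N → ℝ) × (Fin M → Fin N → ℝ) × (Fin N → ℝ) |
      (Matrix.of x.1 * Matrix.diagonal x.2.2 * (Matrix.of x.2.1).transpose).rank ≠ min M N} ⊆
      packACC M N ⁻¹' Z := by
    intro x hx
    simp only [Set.mem_setOf_eq] at hx
    simp only [Set.mem_preimage, hZ, Set.mem_setOf_eq, eval_detPoly]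
    by_contra hdet
    exact hx (le_antisymm (aux_rank_le M N _ _ _) (aux_rank_ge M N _ hdet))
  refine measure_mono_null hsub ?_
  have hZmeas : MeasurableSet Z :=
    (MvPolynomial.continuous_eval _).measurable (measurableSet_singleton 0)
  rw [(packACC_measurePreserving M N).measure_preimage hZmeas.nullMeasurableSet]
  exact aux_poly_null (detPoly M N)
    (packACC M N (fun i j => if (i : ℕ) = (j : ℕ) then (1:ℝ) else 0,
      fun i j => if (i : ℕ) = (j : ℕ) then (1:ℝ) else 0, fun _ => (1:ℝ)))
    (by rw [eval_detPoly]; exact aux_witness M N)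
end

section
/- Let x ∈ ℝ^{MN+N}, with A(x) ∈ ℝ^{M×N} holding the first MN entries and D(x) ∈ ℝ^{N×N} diagonal with the last N entries. Then the set of x for which rank(A(x)·D(x)·A(x)ᵀ) ≠ min{M,N} has Lebesgue measure zero. -/
open MeasureTheory

/-- Zero set of a nonzero multivariate polynomial over `Fin n` is Lebesgue-null. -/
theorem mv_poly_zero_set_null : ∀ (n : ℕ) (p : MvPolynomial (Fin n) ℝ), p ≠ 0 →
    volume {x : Fin n → ℝ | MvPolynomial.eval x p = 0} = 0 := by
  intro n
  induction n with
  | zero =>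
    intro p hp
    obtain ⟨c, rfl⟩ := MvPolynomial.C_surjective (Fin 0) p
    have hc : c ≠ 0 := fun h => hp (by simp [h])
    have : {x : Fin 0 → ℝ | MvPolynomial.eval x (MvPolynomial.C c) = 0} = ∅ := by
      ext x; simp [hc]
    rw [this]; exact measure_empty
  | succ n ih =>
    intro p hp
    set q : Polynomial (MvPolynomial (Fin n) ℝ) := MvPolynomial.finSuccEquiv ℝ n p with hq
    have hq0 : q ≠ 0 := by
      intro h
      apply hp
      have := congrArg (MvPolynomial.finSuccEquiv ℝ n).symm (hq ▸ h)
      simpa using this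
    have hlc : q.leadingCoeff ≠ 0 := Polynomial.leadingCoeff_ne_zero.mpr hq0
    have hScont : Continuous fun x : Fin (n+1) → ℝ => MvPolynomial.eval x p :=
      MvPolynomial.continuous_eval p
    have hSmeas : MeasurableSet {x : Fin (n+1) → ℝ | MvPolynomial.eval x p = 0} :=
      (isClosed_singleton.preimage hScont).measurableSet
    set S' : Set ((Fin n → ℝ) × ℝ) :=
      {yt | MvPolynomial.eval (Fin.cons yt.2 yt.1) p = 0} with hS'
    have hconsCont : Continuous fun yt : (Fin n → ℝ) × ℝ =>
        (Fin.cons yt.2 yt.1 : Fin (n+1) → ℝ) := by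
      apply continuous_pi
      intro i
      refine Fin.cases ?_ ?_ i
      · simpa using continuous_snd
      · intro j; simp only [Fin.cons_succ]; fun_prop
    have hS'meas : MeasurableSet S' :=
      (isClosed_singleton.preimage (hScont.comp hconsCont)).measurableSet
    set e := MeasurableEquiv.piFinSuccAbove (fun _ : Fin (n+1) => ℝ) 0 with he
    have hmp : MeasurePreserving (⇑e) volume ((volume : Measure ℝ).prod volume) := by
      simpa only [← volume_pi] using
        measurePreserving_piFinSuccAbove (fun _ : Fin (n+1) => (volume : Measure ℝ)) 0
    have hpre : e.symm ⁻¹' {x : Fin (n+1) → ℝ | MvPolynomial.eval x p = 0}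
        = Prod.swap ⁻¹' S' := by
      ext ⟨t, y⟩
      simp only [Set.mem_preimage, Set.mem_setOf_eq, he, hS',
        MeasurableEquiv.piFinSuccAbove_symm_apply, Fin.insertNthEquiv_zero, Fin.consEquiv_apply,
        Prod.swap]
      exact Iff.rfl
    have h1 : volume {x : Fin (n+1) → ℝ | MvPolynomial.eval x p = 0}
        = ((volume : Measure (Fin n → ℝ)).prod (volume : Measure ℝ)) S' := by
      rw [← (Measure.measurePreserving_swap).measure_preimage hS'meas.nullMeasurableSet, ← hpre]
      rw [(hmp.symm e).measure_preimage hSmeas.nullMeasurableSet]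
    rw [h1]
    rw [Measure.measure_prod_null hS'meas]
    have hZ : volume {y : Fin n → ℝ | MvPolynomial.eval y q.leadingCoeff = 0} = 0 :=
      ih _ hlc
    have hae : ∀ᵐ y : Fin n → ℝ, MvPolynomial.eval y q.leadingCoeff ≠ 0 := by
      rw [ae_iff]
      simpa using hZ
    filter_upwards [hae] with y hy
    have hr : (Prod.mk y ⁻¹' S') = {t : ℝ | (q.map (MvPolynomial.eval y)).IsRoot t} := by
      ext t
      simp only [Set.mem_preimage, hS', Set.mem_setOf_eq, Polynomial.IsRoot]
      rw [MvPolynomial.eval_eq_eval_mv_eval']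
    have hmapne : q.map (MvPolynomial.eval y) ≠ 0 := by
      intro h
      apply hy
      have h2 := congrArg (fun r => Polynomial.coeff r q.natDegree) h
      simp only [Polynomial.coeff_map, Polynomial.coeff_zero] at h2
      rw [Polynomial.leadingCoeff]
      exact h2
    rw [hr]
    exact Set.Finite.measure_zero (Polynomial.finite_setOf_isRoot hmapne) _

/-- Zero set of a nonzero multivariate polynomial over any finite index type is null. -/
theorem mv_poly_zero_set_null' (σ : Type*) [Fintype σ] (p : MvPolynomial σ ℝ)
    (hp : p ≠ 0) : volume {x : σ → ℝ | MvPolynomial.eval x p = 0} = 0 := by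
  classical
  set n := Fintype.card σ with hn
  set e : σ ≃ Fin n := Fintype.equivFin σ with he
  set F := MeasurableEquiv.piCongrLeft (fun _ : σ => ℝ) e.symm with hF
  have hFmp : MeasurePreserving F volume volume :=
    volume_measurePreserving_piCongrLeft (fun _ : σ => ℝ) e.symm
  have hmeas : MeasurableSet {x : σ → ℝ | MvPolynomial.eval x p = 0} :=
    (isClosed_singleton.preimage (MvPolynomial.continuous_eval p)).measurableSet
  have hFz : ∀ z : Fin n → ℝ, F z = z ∘ e := by
    intro z
    funext s
    simp [hF, MeasurableEquiv.piCongrLeft, Equiv.piCongrLeft, Equiv.piCongrLeft',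
      eq_rec_constant]
  have hpre : F ⁻¹' {x : σ → ℝ | MvPolynomial.eval x p = 0}
      = {z : Fin n → ℝ | MvPolynomial.eval z (MvPolynomial.rename e p) = 0} := by
    ext z
    simp only [Set.mem_preimage, Set.mem_setOf_eq, hFz z, MvPolynomial.eval_rename]
  rw [← hFmp.measure_preimage hmeas.nullMeasurableSet, hpre]
  exact mv_poly_zero_set_null n _
    (fun h => hp ((MvPolynomial.rename_injective e e.injective) (by simpa using h)))

/-- Uncurrying is measure preserving between `ℝ^{M×N}` as a pi-of-pi space and as a
pi space over the product index. -/
theorem measurePreserving_uncurryMN (M N : ℕ) :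
    MeasurePreserving (fun (x : Fin M → Fin N → ℝ) (p : Fin M × Fin N) => x p.1 p.2)
      volume volume := by
  constructor
  · exact measurable_pi_iff.mpr fun p =>
      (measurable_pi_apply p.2).comp (measurable_pi_apply p.1)
  · rw [show (volume : Measure (Fin M × Fin N → ℝ)) = Measure.pi fun _ => volume from rfl]
    refine (Measure.pi_eq fun s hs => ?_).symm
    rw [Measure.map_apply (measurable_pi_iff.mpr fun p =>
      (measurable_pi_apply p.2).comp (measurable_pi_apply p.1)) (MeasurableSet.univ_pi hs)]
    have : (fun (x : Fin M → Fin N → ℝ) (p : Fin M × Fin N) => x p.1 p.2) ⁻¹'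
        Set.univ.pi (fun p => s p)
        = Set.univ.pi (fun i : Fin M => Set.univ.pi fun j : Fin N => s (i, j)) := by
      ext x
      simp [Set.mem_pi]
    rw [this, volume_pi, Measure.pi_pi]
    simp_rw [volume_pi, Measure.pi_pi]
    rw [← Finset.prod_product']
    rfl

/-- The "shared" variant of the `A·D·Bᵀ` rank lemma, with `B(x) = A(x)`:
for `x ∈ ℝ^{MN+N}` with `A(x)` the `M × N` matrix of the first `M·N` entries and `D(x)`
diagonal with the last `N` entries, the set of `x` with
`rank (A(x) · D(x) · A(x)ᵀ) ≠ min M N` has Lebesgue measure zero. -/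
theorem rank_ADAt_eq_min_almost_everywhere (M N : ℕ) :
    volume {x : (Fin M → Fin N → ℝ) × (Fin N → ℝ) |
      (Matrix.of x.1 * Matrix.diagonal x.2 * (Matrix.of x.1).transpose).rank ≠ min M N} = 0 := by
  classical
  set k := min M N with hk
  set σ := ((Fin M × Fin N) ⊕ Fin N) with hσ
  set Amat : Matrix (Fin M) (Fin N) (MvPolynomial σ ℝ) :=
    Matrix.of fun i j => MvPolynomial.X (Sum.inl (i, j)) with hAmat
  set Dmat : Matrix (Fin N) (Fin N) (MvPolynomial σ ℝ) :=
    Matrix.diagonal (fun j : Fin N => MvPolynomial.X (Sum.inr j)) with hDmat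
  set r : Fin k → Fin M := Fin.castLE (min_le_left M N) with hr
  set pdet : MvPolynomial σ ℝ := ((Amat * Dmat * Amat.transpose).submatrix r r).det with hpdet
  set Φ : (Fin M → Fin N → ℝ) × (Fin N → ℝ) → (σ → ℝ) :=
    fun x => Sum.elim (fun ij => x.1 ij.1 ij.2) x.2 with hΦdef
  -- Φ is measure preserving
  have hΦ : MeasurePreserving Φ volume volume := by
    have h1 := (measurePreserving_uncurryMN M N).prod
      (MeasurePreserving.id (volume : Measure (Fin N → ℝ)))
    have h2 := volume_measurePreserving_sumPiEquivProdPi_symm (fun _ : σ => ℝ)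
    have h3 := h2.comp h1
    have : Φ = (⇑(MeasurableEquiv.sumPiEquivProdPi (fun _ : σ => ℝ)).symm) ∘
        (Prod.map (fun (x : Fin M → Fin N → ℝ) (p : Fin M × Fin N) => x p.1 p.2) id) := by
      funext x
      funext s
      cases s <;> rfl
    rw [this]
    exact h3
  -- evaluation of the polynomial
  have heval : ∀ x : (Fin M → Fin N → ℝ) × (Fin N → ℝ),
      MvPolynomial.eval (Φ x) pdet =
        ((Matrix.of x.1 * Matrix.diagonal x.2 * (Matrix.of x.1).transpose).submatrix r r).det := by
    intro x
    rw [hpdet, RingHom.map_det]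
    simp only [RingHom.mapMatrix_apply]
    rw [← Matrix.submatrix_map]
    have hmapA : Amat.map (MvPolynomial.eval (Φ x)) = Matrix.of x.1 := by
      ext i j; simp [hAmat, hΦdef]
    have hmapD : Dmat.map (MvPolynomial.eval (Φ x)) = Matrix.diagonal x.2 := by
      rw [hDmat, Matrix.diagonal_map (map_zero _)]
      funext j
      simp [hΦdef]
    rw [Matrix.map_mul, Matrix.map_mul, Matrix.transpose_map, hmapA, hmapD]
  -- the polynomial is nonzero
  have hne : pdet ≠ 0 := by
    intro h0
    set x₀ : (Fin M → Fin N → ℝ) × (Fin N → ℝ) :=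
      (fun i j => if (i : ℕ) = (j : ℕ) then 1 else 0, fun _ => 1) with hx₀
    have h1 : MvPolynomial.eval (Φ x₀) pdet = 1 := by
      rw [heval]
      have hD : Matrix.diagonal x₀.2 = (1 : Matrix (Fin N) (Fin N) ℝ) := by
        simp [hx₀]
      rw [hD, Matrix.mul_one]
      have hsub1 : ((Matrix.of x₀.1 * (Matrix.of x₀.1).transpose).submatrix r r)
          = (1 : Matrix (Fin k) (Fin k) ℝ) := by
        ext a b
        simp only [Matrix.submatrix_apply, Matrix.mul_apply, Matrix.transpose_apply,
          Matrix.of_apply, Matrix.one_apply, hx₀]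
        set ja : Fin N := ⟨(a : ℕ), lt_of_lt_of_le a.isLt (min_le_right M N)⟩ with hja
        rw [Finset.sum_eq_single ja]
        · have h2 : ((r a : Fin M) : ℕ) = (ja : ℕ) := rfl
          simp only [h2]
          by_cases hab : a = b
          · subst hab; simp [hr, hja]
          · have : ¬ ((r b : Fin M) : ℕ) = (ja : ℕ) := by
              simp only [hr, Fin.coe_castLE, hja]
              exact fun h => hab (Fin.ext h.symm)
            simp [this, hab]
        · intro j _ hj
          have : ¬ ((r a : Fin M) : ℕ) = (j : ℕ) := by
            simp only [hr, Fin.coe_castLE]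
            exact fun h => hj (Fin.ext h.symm)
          simp [this]
        · intro h; exact absurd (Finset.mem_univ ja) h
      rw [hsub1, Matrix.det_one]
    rw [h0] at h1
    simp at h1
  -- the bad set is contained in the zero set of the polynomial
  have hincl : {x : (Fin M → Fin N → ℝ) × (Fin N → ℝ) |
        (Matrix.of x.1 * Matrix.diagonal x.2 * (Matrix.of x.1).transpose).rank ≠ min M N}
      ⊆ Φ ⁻¹' {y : σ → ℝ | MvPolynomial.eval y pdet = 0} := by
    intro x hx
    simp only [Set.mem_setOf_eq] at hx
    by_contra hc
    apply hx
    have hdet : ((Matrix.of x.1 * Matrix.diagonal x.2 * (Matrix.of x.1).transpose).submatrix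
        r r).det ≠ 0 := by
      rw [← heval x]
      exact hc
    set S := Matrix.of x.1 * Matrix.diagonal x.2 * (Matrix.of x.1).transpose with hS
    have hTrank : (S.submatrix r r).rank = k := by
      rw [Matrix.rank_of_isUnit _ ((Matrix.isUnit_iff_isUnit_det _).mpr
        (isUnit_iff_ne_zero.mpr hdet))]
      simp
    have hle1 : (S.submatrix r r).rank ≤ S.rank := by
      have e1 : ((1 : Matrix (Fin M) (Fin M) ℝ).submatrix r (Equiv.refl (Fin M))) * S
          = S.submatrix r id := by
        simpa using Matrix.one_submatrix_mul (o := Fin M) r (Equiv.refl (Fin M)) S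
      have e2 : (S.submatrix r id) *
          ((1 : Matrix (Fin M) (Fin M) ℝ).submatrix (Equiv.refl (Fin M)) r)
          = S.submatrix r r := by
        simpa using Matrix.mul_submatrix_one (Equiv.refl (Fin M)) r (S.submatrix r id)
      calc (S.submatrix r r).rank
          = ((S.submatrix r id) *
            ((1 : Matrix (Fin M) (Fin M) ℝ).submatrix (Equiv.refl (Fin M)) r)).rank := by
            rw [e2]
        _ ≤ (S.submatrix r id).rank := Matrix.rank_mul_le_left _ _
        _ = (((1 : Matrix (Fin M) (Fin M) ℝ).submatrix r (Equiv.refl (Fin M))) * S).rank := by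
            rw [e1]
        _ ≤ S.rank := Matrix.rank_mul_le_right _ _
    have hle2 : S.rank ≤ k := by
      refine le_min ?_ ?_
      · calc S.rank ≤ (Matrix.of x.1 * Matrix.diagonal x.2).rank := Matrix.rank_mul_le_left _ _
          _ ≤ (Matrix.of x.1).rank := Matrix.rank_mul_le_left _ _
          _ ≤ M := by simpa using (Matrix.of x.1).rank_le_card_height
      · calc S.rank ≤ (Matrix.of x.1 * Matrix.diagonal x.2).rank := Matrix.rank_mul_le_left _ _
          _ ≤ (Matrix.of x.1).rank := Matrix.rank_mul_le_left _ _
          _ ≤ N := by simpa using (Matrix.of x.1).rank_le_card_width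
    exact le_antisymm hle2 (le_trans (le_of_eq hTrank.symm) hle1)
  -- conclude
  have hZmeas : MeasurableSet {y : σ → ℝ | MvPolynomial.eval y pdet = 0} :=
    (isClosed_singleton.preimage (MvPolynomial.continuous_eval pdet)).measurableSet
  refine le_antisymm ?_ zero_le
  calc volume {x : (Fin M → Fin N → ℝ) × (Fin N → ℝ) |
        (Matrix.of x.1 * Matrix.diagonal x.2 * (Matrix.of x.1).transpose).rank ≠ min M N}
      ≤ volume (Φ ⁻¹' {y : σ → ℝ | MvPolynomial.eval y pdet = 0}) := measure_mono hincl
    _ = volume {y : σ → ℝ | MvPolynomial.eval y pdet = 0} :=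
        hΦ.measure_preimage hZmeas.nullMeasurableSet
    _ = 0 := mv_poly_zero_set_null' σ pdet hne
end

section
/- Let A₁,…,A_p : ℝ^d → ℝ^{M×N} be continuous mappings such that the set of points y ∈ ℝ^d with rank(Aᵢ(y)) < r for all i ∈ [p] has Lebesgue measure zero. Define A(x,y) := Σᵢ₌₁^p xᵢ·Aᵢ(y) for (x,y) ∈ ℝ^p × ℝ^d. Then the set of points (x,y) for which rank(A(x,y)) < r has Lebesgue measure zero. -/
open MeasureTheory MvPolynomial Matrix


theorem mvpoly_zero_set_volume (n : ℕ) (P : MvPolynomial (Fin n) ℝ) (hP : P ≠ 0) :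
    volume {x : Fin n → ℝ | MvPolynomial.eval x P = 0} = 0 := by
  induction n with
  | zero =>
    obtain ⟨a, rfl⟩ := MvPolynomial.C_surjective (Fin 0) P
    have ha : a ≠ 0 := fun h => hP (by simp [h])
    have h : {x : Fin 0 → ℝ | MvPolynomial.eval x (C a) = 0} = ∅ := by
      ext x; simp [ha]
    rw [h]; exact measure_empty
  | succ n ih =>
    set Q := finSuccEquiv ℝ n P with hQdef
    have hQ : Q ≠ 0 := by
      simp only [hQdef, ne_eq, EmbeddingLike.map_eq_zero_iff]
      exact hP
    obtain ⟨k, hk⟩ : ∃ k, Q.coeff k ≠ 0 := by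
      by_contra h
      push_neg at h
      exact hQ (Polynomial.ext fun k => by simp [h k])
    -- T lives in (Fin n → ℝ) × ℝ
    set T : Set ((Fin n → ℝ) × ℝ) :=
      {sa | MvPolynomial.eval (Fin.cons sa.2 sa.1) P = 0} with hTdef
    have hconscont : Continuous fun sa : (Fin n → ℝ) × ℝ => (Fin.cons sa.2 sa.1 : Fin (n+1) → ℝ) := by
      refine continuous_pi fun i => ?_
      refine Fin.cases ?_ (fun j => ?_) i
      · simpa using continuous_snd
      · exact (continuous_apply j).comp continuous_fst
    have hTmeas : MeasurableSet T := by
      have : Continuous fun sa : (Fin n → ℝ) × ℝ =>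
          MvPolynomial.eval (Fin.cons sa.2 sa.1) P :=
        (MvPolynomial.continuous_eval (p := P)).comp hconscont
      exact (isClosed_eq this continuous_const).measurableSet
    have hTzero : (volume.prod volume) T = 0 := by
      rw [Measure.measure_prod_null hTmeas]
      have hae : ∀ᵐ s : Fin n → ℝ, MvPolynomial.eval s (Q.coeff k) ≠ 0 := by
        rw [ae_iff]
        simpa using ih (Q.coeff k) hk
      filter_upwards [hae] with s hs
      have hqs : (Q.map (MvPolynomial.eval s)) ≠ 0 := by
        intro h
        apply hs
        rw [← Polynomial.coeff_map, h, Polynomial.coeff_zero]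
      have hsub : (Prod.mk s ⁻¹' T) ⊆ {a : ℝ | Polynomial.IsRoot (Q.map (MvPolynomial.eval s)) a} := by
        intro a ha
        simp only [hTdef, Set.mem_preimage, Set.mem_setOf_eq] at ha
        rw [MvPolynomial.eval_eq_eval_mv_eval' s a P] at ha
        exact ha
      exact measure_mono_null hsub ((Polynomial.finite_setOf_isRoot hqs).measure_zero _)
    -- transfer via measure preserving maps
    set e := MeasurableEquiv.piFinSuccAbove (fun _ : Fin (n+1) => ℝ) 0
    have hmp : MeasurePreserving (fun x : Fin (n+1) → ℝ => Prod.swap (e x)) volume (volume.prod volume) := by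
      have h1 := volume_preserving_piFinSuccAbove (fun _ : Fin (n+1) => ℝ) 0
      have h2 : MeasurePreserving (Prod.swap : ℝ × (Fin n → ℝ) → (Fin n → ℝ) × ℝ)
          (volume.prod volume) (volume.prod volume) := Measure.measurePreserving_swap
      have h3 := h2.comp h1
      convert h3 using 1 <;> rfl
    have hS : {x : Fin (n+1) → ℝ | MvPolynomial.eval x P = 0}
        = (fun x : Fin (n+1) → ℝ => Prod.swap (e x)) ⁻¹' T := by
      ext x
      simp only [Set.mem_setOf_eq, Set.mem_preimage, hTdef]
      have : (Fin.cons (Prod.swap (e x)).2 (Prod.swap (e x)).1 : Fin (n+1) → ℝ) = x := by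
        simp only [e, Prod.snd_swap, Prod.fst_swap]
        have h0 : e x = (x 0, Fin.removeNth 0 x) := rfl
        rw [h0]
        simp [Fin.removeNth_zero, Fin.cons_self_tail]
      rw [this]
    rw [hS, hmp.measure_preimage hTmeas.nullMeasurableSet, hTzero]


theorem my_rank_submatrix_le {M N r : ℕ} (A : Matrix (Fin M) (Fin N) ℝ)
    (f : Fin r → Fin M) (g : Fin r → Fin N) :
    (A.submatrix f g).rank ≤ A.rank := by
  have h1 : A.submatrix f g =
      ((1 : Matrix (Fin M) (Fin M) ℝ).submatrix f ⇑(Equiv.refl (Fin M))) *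
        (A.submatrix ⇑(Equiv.refl (Fin M)) g) := by
    rw [Matrix.submatrix_mul_equiv, Matrix.one_mul]
  have h2 : A.submatrix ⇑(Equiv.refl (Fin M)) g =
      (A.submatrix _root_.id ⇑(Equiv.refl (Fin N))) *
        ((1 : Matrix (Fin N) (Fin N) ℝ).submatrix ⇑(Equiv.refl (Fin N)) g) := by
    rw [Matrix.submatrix_mul_equiv, Matrix.mul_one]
    rfl
  calc (A.submatrix f g).rank ≤ (A.submatrix ⇑(Equiv.refl (Fin M)) g).rank := by
        rw [h1]; exact Matrix.rank_mul_le_right _ _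
    _ ≤ (A.submatrix _root_.id ⇑(Equiv.refl (Fin N))).rank := by
        rw [h2]; exact Matrix.rank_mul_le_left _ _
    _ = A.rank := by simp

theorem my_rank_ge_of_minor {M N r : ℕ} (A : Matrix (Fin M) (Fin N) ℝ)
    (f : Fin r → Fin M) (g : Fin r → Fin N) (h : (A.submatrix f g).det ≠ 0) :
    r ≤ A.rank := by
  have hu : IsUnit (A.submatrix f g) :=
    (Matrix.isUnit_iff_isUnit_det _).mpr (isUnit_iff_ne_zero.mpr h)
  have := Matrix.rank_of_isUnit _ hu
  calc r = Fintype.card (Fin r) := (Fintype.card_fin r).symm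
    _ = (A.submatrix f g).rank := this.symm
    _ ≤ A.rank := my_rank_submatrix_le A f g

theorem exists_rows_linIndep {M N r : ℕ} (A : Matrix (Fin M) (Fin N) ℝ)
    (h : r ≤ A.rank) :
    ∃ f : Fin r → Fin M, LinearIndependent ℝ (fun i => A (f i)) := by
  classical
  rw [Matrix.rank_eq_finrank_span_row] at h
  obtain ⟨b, hbsub, hbspan, hbind⟩ := exists_linearIndependent ℝ (Set.range A)
  have hbfin : b.Finite := (Set.finite_range A).subset hbsub
  have : Fintype b := hbfin.fintype
  have hcard : r ≤ Fintype.card b := by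
    rw [← Set.toFinset_card]
    calc r ≤ Module.finrank ℝ (Submodule.span ℝ (Set.range A)) := h
      _ = Module.finrank ℝ (Submodule.span ℝ b) := by rw [hbspan]
      _ = b.toFinset.card := finrank_span_set_eq_card hbind
  obtain ⟨φ⟩ : Nonempty (Fin r ↪ b) := by
    rw [← Fintype.card_fin r] at hcard
    exact Function.Embedding.nonempty_of_card_le hcard
  have hchoice : ∀ i : Fin r, ∃ m : Fin M, A m = (φ i : Fin N → ℝ) := fun i =>
    Set.mem_range.mp (hbsub (φ i).2)
  choose f hf using hchoice
  refine ⟨f, ?_⟩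
  have : (fun i => A (f i)) = (fun x : b => (x : Fin N → ℝ)) ∘ φ := by
    funext i; simp [hf i]
  rw [this]
  exact hbind.comp φ φ.injective

theorem exists_minor {M N r : ℕ} (A : Matrix (Fin M) (Fin N) ℝ) (h : r ≤ A.rank) :
    ∃ (f : Fin r → Fin M) (g : Fin r → Fin N), (A.submatrix f g).det ≠ 0 := by
  obtain ⟨f, hf⟩ := exists_rows_linIndep A h
  set B := A.submatrix f _root_.id with hBdef
  have hB : B.rank = r := by
    have : LinearIndependent ℝ (fun i => B i) := hf
    exact this.rank_matrix.trans (Fintype.card_fin r)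
  have hBt : r ≤ Bᵀ.rank := by rw [Matrix.rank_transpose, hB]
  obtain ⟨g, hg⟩ := exists_rows_linIndep Bᵀ hBt
  have hgu : IsUnit (Bᵀ.submatrix g _root_.id) := by
    apply Matrix.linearIndependent_rows_iff_isUnit.mp
    exact hg
  have hdet : (Bᵀ.submatrix g _root_.id).det ≠ 0 := by
    intro hc
    exact ((Matrix.isUnit_iff_isUnit_det _).mp hgu).ne_zero (by simpa using hc)
  refine ⟨f, g, ?_⟩
  have heq : A.submatrix f g = (Bᵀ.submatrix g _root_.id)ᵀ := by
    ext i j; rfl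
  rw [heq, Matrix.det_transpose]
  exact hdet


theorem det_linear_poly {p M N r : ℕ} (B : Fin p → Matrix (Fin M) (Fin N) ℝ)
    (f : Fin r → Fin M) (g : Fin r → Fin N) (x : Fin p → ℝ) :
    MvPolynomial.eval x (Matrix.det (Matrix.of fun a b : Fin r =>
      ∑ j : Fin p, (MvPolynomial.X j : MvPolynomial (Fin p) ℝ) * MvPolynomial.C (B j (f a) (g b)))) =
    ((∑ j, x j • B j).submatrix f g).det := by
  rw [RingHom.map_det]
  congr 1
  ext a b
  simp [Matrix.map_apply, Matrix.submatrix_apply, Matrix.sum_apply, Matrix.smul_apply,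
    smul_eq_mul]

/-- Let `A₁, …, A_p : ℝ^d → ℝ^{M×N}` be continuous mappings such that the set
of `y` with `rank (Aᵢ y) < r` for all `i` has Lebesgue measure zero.  Then the set of points
`(x, y)` for which `rank (∑ i, xᵢ • Aᵢ y) < r` has Lebesgue measure zero. -/
theorem rank_linear_combination_almost_everywhere (p d M N r : ℕ)
    (A : Fin p → (Fin d → ℝ) → Matrix (Fin M) (Fin N) ℝ)
    (hcont : ∀ i, Continuous (A i))
    (hzero : volume {y : Fin d → ℝ | ∀ i, (A i y).rank < r} = 0) :
    volume {xy : (Fin p → ℝ) × (Fin d → ℝ) |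
      (∑ i, xy.1 i • A i xy.2).rank < r} = 0 := by
  classical
  have hsub : {xy : (Fin p → ℝ) × (Fin d → ℝ) | (∑ i, xy.1 i • A i xy.2).rank < r} ⊆
      (Set.univ ×ˢ {y : Fin d → ℝ | ∀ i, (A i y).rank < r}) ∪
      ⋃ (i : Fin p) (f : Fin r → Fin M) (g : Fin r → Fin N),
        {xy : (Fin p → ℝ) × (Fin d → ℝ) |
          ((A i xy.2).submatrix f g).det ≠ 0 ∧
            ((∑ j, xy.1 j • A j xy.2).submatrix f g).det = 0} := by
    intro xy hxy
    by_cases hy : ∀ i, (A i xy.2).rank < r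
    · exact Or.inl ⟨Set.mem_univ _, hy⟩
    · right
      push_neg at hy
      obtain ⟨i, hi⟩ := hy
      obtain ⟨f, g, hfg⟩ := exists_minor (A i xy.2) hi
      refine Set.mem_iUnion.mpr ⟨i, Set.mem_iUnion.mpr ⟨f, Set.mem_iUnion.mpr ⟨g, ⟨hfg, ?_⟩⟩⟩⟩
      by_contra hc
      exact absurd (my_rank_ge_of_minor _ f g hc) (not_le.mpr hxy)
  refine measure_mono_null hsub (measure_union_null ?_ ?_)
  · rw [Measure.volume_eq_prod, Measure.prod_prod, hzero, mul_zero]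
  · refine measure_iUnion_null fun i => measure_iUnion_null fun f =>
      measure_iUnion_null fun g => ?_
    set V : Set ((Fin d → ℝ) × (Fin p → ℝ)) :=
      {yx | ((A i yx.1).submatrix f g).det ≠ 0 ∧
        ((∑ j, yx.2 j • A j yx.1).submatrix f g).det = 0} with hVdef
    have hF1 : Continuous fun yx : (Fin d → ℝ) × (Fin p → ℝ) =>
        ((A i yx.1).submatrix f g).det := by
      apply Continuous.matrix_det
      apply continuous_matrix
      intro a b
      exact ((continuous_apply (g b)).comp ((continuous_apply (f a)).comp
        ((hcont i).comp continuous_fst)))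
    have hF2 : Continuous fun yx : (Fin d → ℝ) × (Fin p → ℝ) =>
        ((∑ j, yx.2 j • A j yx.1).submatrix f g).det := by
      apply Continuous.matrix_det
      apply continuous_matrix
      intro a b
      have : (fun yx : (Fin d → ℝ) × (Fin p → ℝ) =>
          (∑ j, yx.2 j • A j yx.1).submatrix f g a b)
          = fun yx : (Fin d → ℝ) × (Fin p → ℝ) =>
          ∑ j, yx.2 j * A j yx.1 (f a) (g b) := by
        funext yx
        simp [Matrix.submatrix_apply, Matrix.sum_apply, Matrix.smul_apply, smul_eq_mul]
      rw [this]
      refine continuous_finset_sum _ fun j _ => ?_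
      exact ((continuous_apply j).comp continuous_snd).mul
        ((continuous_apply (g b)).comp ((continuous_apply (f a)).comp
          ((hcont j).comp continuous_fst)))
    have hVmeas : MeasurableSet V := by
      rw [hVdef, Set.setOf_and]
      exact ((isClosed_eq hF1 continuous_const).measurableSet.compl).inter
        (isClosed_eq hF2 continuous_const).measurableSet
    have hVzero : (volume.prod volume) V = 0 := by
      rw [Measure.measure_prod_null hVmeas]
      refine Filter.Eventually.of_forall fun y => ?_
      show volume (Prod.mk y ⁻¹' V) = 0
      by_cases hd : ((A i y).submatrix f g).det = 0
      · have : Prod.mk y ⁻¹' V = ∅ := by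
          ext x; simp [hVdef, hd]
        rw [this]; exact measure_empty
      · set P : MvPolynomial (Fin p) ℝ := Matrix.det (Matrix.of fun a b : Fin r =>
          ∑ j : Fin p, (MvPolynomial.X j : MvPolynomial (Fin p) ℝ) *
            MvPolynomial.C (A j y (f a) (g b))) with hPdef
        have hsum : (∑ j, (Pi.single i (1:ℝ) : Fin p → ℝ) j • A j y) = A i y := by
          rw [Finset.sum_eq_single i]
          · simp
          · intro j _ hj
            simp [Pi.single_eq_of_ne hj]
          · simp
        have hP : P ≠ 0 := by
          intro h0
          apply hd
          have := det_linear_poly (fun j => A j y) f g ((Pi.single i 1 : Fin p → ℝ))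
          rw [← hPdef, h0, map_zero] at this
          rw [← hsum]
          exact this.symm
        refine measure_mono_null ?_ (mvpoly_zero_set_volume p P hP)
        intro x hx
        simp only [hVdef, Set.mem_preimage, Set.mem_setOf_eq] at hx
        have := det_linear_poly (fun j => A j y) f g x
        rw [← hPdef] at this
        simp only [Set.mem_setOf_eq, this]
        exact hx.2
    have hUV : {xy : (Fin p → ℝ) × (Fin d → ℝ) |
        ((A i xy.2).submatrix f g).det ≠ 0 ∧
          ((∑ j, xy.1 j • A j xy.2).submatrix f g).det = 0} = Prod.swap ⁻¹' V := rfl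
    rw [hUV, Measure.volume_eq_prod,
      Measure.measurePreserving_swap.measure_preimage hVmeas.nullMeasurableSet, hVzero]
end

section
/- Let f₁,…,f_M ∈ L²(ℝ^s) be linearly independent, let 𝒯 be the space of order-N tensors with dimension M in each mode, and for A ∈ 𝒯 define h(A)(x₁,…,x_N) := Σ_{d₁…d_N} A_{d₁…d_N} ∏ᵢ f_{d_i}(x_i). If {A^λ}_{λ∈Λ} ⊂ 𝒯 is a family of tensors and A* a target tensor with rank([A^λ]) < rank([A*]) for all λ, then there exists ε > 0 such that ∫|h(A^λ) − h(A*)|² > ε for all λ ∈ Λ, i.e. h(A*) is bounded away from the family {h(A^λ)} in L². -/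
open MeasureTheory

/-- Matricization of an even-order tensor: odd modes (1-indexed) to rows, even modes to columns. -/
def matricize {n : ℕ} {Md : Fin (2 * n) → ℕ} (A : (∀ i, Fin (Md i)) → ℝ) :
    Matrix (∀ j : Fin n, Fin (Md ⟨2 * j.1, by omega⟩))
           (∀ j : Fin n, Fin (Md ⟨2 * j.1 + 1, by omega⟩)) ℝ :=
  fun row col => A fun i =>
    if h : i.1 % 2 = 0 then
      Fin.cast (congrArg Md (show (⟨2 * (i.1 / 2), by omega⟩ : Fin (2 * n)) = i from Fin.ext (by simp only [Fin.val_mk]; omega)))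
        (row ⟨i.1 / 2, by omega⟩)
    else
      Fin.cast (congrArg Md (show (⟨2 * (i.1 / 2) + 1, by omega⟩ : Fin (2 * n)) = i from Fin.ext (by simp only [Fin.val_mk]; omega)))
        (col ⟨i.1 / 2, by omega⟩)

section RankClosed

variable {m l : Type*} [Fintype m] [Fintype l]

lemma isOpen_nat_le_matrixRank (k : ℕ) :
    IsOpen {A : Matrix m l ℝ | k ≤ A.rank} := by
  classical
  have hψ : Continuous fun A : Matrix m l ℝ =>
      (LinearMap.toContinuousLinearMap (Matrix.mulVecLin A) : (l → ℝ) →L[ℝ] (m → ℝ)) := by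
    let ψ : Matrix m l ℝ →ₗ[ℝ] ((l → ℝ) →L[ℝ] (m → ℝ)) :=
      { toFun := fun A => LinearMap.toContinuousLinearMap (Matrix.mulVecLin A)
        map_add' := fun A B => by
          ext v j
          simp [Matrix.mulVecLin_apply, Matrix.add_mulVec]
        map_smul' := fun c A => by
          ext v j
          simp [Matrix.mulVecLin_apply, Matrix.smul_mulVec] }
    exact ψ.continuous_of_finiteDimensional
  have h := (isOpen_setOf_nat_le_rank (𝕜 := ℝ) (E := l → ℝ) (F := m → ℝ) k).preimage hψ
  convert h using 1
  ext A
  simp only [Set.mem_setOf_eq, Set.preimage_setOf_eq, LinearMap.coe_toContinuousLinearMap]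
  rw [Matrix.rank, LinearMap.rank, ← Module.finrank_eq_rank, Nat.cast_le]

lemma isClosed_matrixRank_lt (k : ℕ) : IsClosed {A : Matrix m l ℝ | A.rank < k} := by
  have h := (isOpen_nat_le_matrixRank (m := m) (l := l) k).isClosed_compl
  convert h using 1
  ext A
  simp [not_le]

end RankClosed

lemma prod_fun_indep {s M : ℕ} (f : Fin M → (Fin s → ℝ) → ℝ)
    (hind : ∀ c : Fin M → ℝ,
      (∀ᵐ x ∂(volume : Measure (Fin s → ℝ)), ∑ d, c d * f d x = 0) → c = 0) :
    ∀ (N : ℕ) (c : (Fin N → Fin M) → ℝ),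
      (∀ᵐ X ∂(volume : Measure (Fin N → Fin s → ℝ)),
        ∑ d, c d * ∏ i, f (d i) (X i) = 0) → c = 0 := by
  intro N
  induction N with
  | zero =>
      intro c hc
      have h1 : (volume : Measure (Fin 0 → Fin s → ℝ)) Set.univ = 1 := by
        rw [volume_pi, Measure.pi_univ]
        simp
      have hne : (volume : Measure (Fin 0 → Fin s → ℝ)) ≠ 0 := by
        intro h
        rw [h] at h1
        simp at h1
      haveI : Filter.NeBot (ae (volume : Measure (Fin 0 → Fin s → ℝ))) := ae_neBot.2 hne
      obtain ⟨X, hX⟩ := hc.exists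
      funext d
      have hd : d = (default : Fin 0 → Fin M) := funext fun i => i.elim0
      rw [hd]
      simpa [Fintype.sum_unique] using hX
  | succ N ih =>
      intro c hc
      have hmp := measurePreserving_piFinSuccAbove
        (fun _ : Fin (N + 1) => (volume : Measure (Fin s → ℝ))) 0
      rw [volume_pi] at hc
      have hmps := hmp.symm (MeasurableEquiv.piFinSuccAbove (fun _ : Fin (N + 1) => (Fin s → ℝ)) 0)
      have h1 := hmps.quasiMeasurePreserving.tendsto_ae.eventually hc
      have key : ∀ (y : Fin s → ℝ) (Z : Fin N → Fin s → ℝ),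
          (∑ d : Fin (N+1) → Fin M, c d * ∏ i, f (d i) (Fin.cons (α := fun _ : Fin (N+1) => Fin s → ℝ) y Z i)) =
          ∑ mm : Fin M, (∑ e : Fin N → Fin M,
            c (Fin.cons mm e) * ∏ j, f (e j) (Z j)) * f mm y := by
        intro y Z
        rw [← (Fin.consEquiv (fun _ : Fin (N+1) => Fin M)).sum_comp
          (fun d => c d * ∏ i, f (d i) (Fin.cons (α := fun _ : Fin (N+1) => Fin s → ℝ) y Z i)), Fintype.sum_prod_type]
        refine Finset.sum_congr rfl fun mm _ => ?_
        rw [Finset.sum_mul]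
        refine Finset.sum_congr rfl fun e _ => ?_
        simp only [Fin.consEquiv, Equiv.coe_fn_mk, Fin.prod_univ_succ, Fin.cons_zero, Fin.cons_succ]
        ring
      have h2 : ∀ᵐ q ∂((volume : Measure (Fin s → ℝ)).prod
          (Measure.pi fun _ : Fin N => (volume : Measure (Fin s → ℝ)))),
          ∑ mm : Fin M, (∑ e : Fin N → Fin M,
            c (Fin.cons mm e) * ∏ j, f (e j) (q.2 j)) * f mm q.1 = 0 := by
        filter_upwards [h1] with q hq
        rw [← key q.1 q.2]
        simpa [MeasurableEquiv.piFinSuccAbove_symm_apply, Fin.insertNth_zero] using hq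
      have h3 := (Measure.measurePreserving_swap
        (μ := (Measure.pi fun _ : Fin N => (volume : Measure (Fin s → ℝ))))
        (ν := (volume : Measure (Fin s → ℝ)))).quasiMeasurePreserving.tendsto_ae.eventually h2
      have h4 := Measure.ae_ae_of_ae_prod h3
      have h5 : ∀ᵐ Z ∂(Measure.pi fun _ : Fin N => (volume : Measure (Fin s → ℝ))),
          ∀ mm : Fin M, ∑ e : Fin N → Fin M, c (Fin.cons mm e) * ∏ j, f (e j) (Z j) = 0 := by
        filter_upwards [h4] with Z hZ
        have := hind (fun mm => ∑ e : Fin N → Fin M,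
          c (Fin.cons mm e) * ∏ j, f (e j) (Z j)) hZ
        exact fun mm => congrFun this mm
      rw [← volume_pi] at h5
      have h6 : ∀ mm : Fin M, (fun e : Fin N → Fin M => c (Fin.cons mm e)) = 0 :=
        fun mm => ih _ (h5.mono fun Z hZ => hZ mm)
      funext d
      have h7 := congrFun (h6 (d 0)) (Fin.tail d)
      rwa [Fin.cons_self_tail] at h7

noncomputable def Qform (s N M : ℕ) (f : Fin M → (Fin s → ℝ) → ℝ)
    (B : (Fin N → Fin M) → ℝ) : ℝ :=
  ∑ d : Fin N → Fin M, ∑ d' : Fin N → Fin M,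
    B d * B d' * ∏ i, ∫ x : Fin s → ℝ, f (d i) x * f (d' i) x

section Qform

variable {s N M : ℕ} {f : Fin M → (Fin s → ℝ) → ℝ}

lemma mul_L2_integrable (hf : ∀ d, MemLp (f d) 2 (volume : Measure (Fin s → ℝ)))
    (a b : Fin M) : Integrable (fun x : Fin s → ℝ => f a x * f b x) volume := by
  have h := (hf b).smul (hf a) (p := 2) (q := 2) (r := 1)
  rw [memLp_one_iff_integrable] at h
  exact h

lemma prod_mul_integrable (hf : ∀ d, MemLp (f d) 2 (volume : Measure (Fin s → ℝ)))
    (d d' : Fin N → Fin M) :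
    Integrable (fun X : Fin N → Fin s → ℝ => ∏ i, (f (d i) (X i) * f (d' i) (X i))) volume :=
  Integrable.fintype_prod (f := fun i x => f (d i) x * f (d' i) x)
    (fun i => mul_L2_integrable hf _ _)

lemma pointwise_sq_expand (B : (Fin N → Fin M) → ℝ) (X : Fin N → Fin s → ℝ) :
    (∑ d : Fin N → Fin M, B d * ∏ i, f (d i) (X i)) ^ 2 =
    ∑ d : Fin N → Fin M, ∑ d' : Fin N → Fin M,
      B d * B d' * ∏ i, (f (d i) (X i) * f (d' i) (X i)) := by
  rw [sq, Finset.sum_mul_sum]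
  refine Finset.sum_congr rfl fun d _ => Finset.sum_congr rfl fun d' _ => ?_
  rw [Finset.prod_mul_distrib]
  ring

lemma sq_sum_integrable (hf : ∀ d, MemLp (f d) 2 (volume : Measure (Fin s → ℝ)))
    (B : (Fin N → Fin M) → ℝ) :
    Integrable (fun X : Fin N → Fin s → ℝ =>
      (∑ d : Fin N → Fin M, B d * ∏ i, f (d i) (X i)) ^ 2) volume := by
  have h : (fun X : Fin N → Fin s → ℝ =>
      (∑ d : Fin N → Fin M, B d * ∏ i, f (d i) (X i)) ^ 2) =
      fun X => ∑ d : Fin N → Fin M, ∑ d' : Fin N → Fin M,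
        B d * B d' * ∏ i, (f (d i) (X i) * f (d' i) (X i)) :=
    funext fun X => pointwise_sq_expand B X
  rw [h]
  exact integrable_finset_sum _ fun d _ => integrable_finset_sum _ fun d' _ =>
    (prod_mul_integrable hf d d').const_mul _

lemma Qform_eq (hf : ∀ d, MemLp (f d) 2 (volume : Measure (Fin s → ℝ)))
    (B : (Fin N → Fin M) → ℝ) :
    ∫ X : Fin N → Fin s → ℝ,
      (∑ d : Fin N → Fin M, B d * ∏ i, f (d i) (X i)) ^ 2 = Qform s N M f B := by
  simp_rw [pointwise_sq_expand B]
  rw [integral_finset_sum _ (fun d _ => integrable_finset_sum _ fun d' _ =>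
    (prod_mul_integrable hf d d').const_mul _)]
  refine Finset.sum_congr rfl fun d _ => ?_
  rw [integral_finset_sum _ (fun d' _ => (prod_mul_integrable hf d d').const_mul _)]
  refine Finset.sum_congr rfl fun d' _ => ?_
  rw [MeasureTheory.integral_const_mul, volume_pi,
    MeasureTheory.integral_fintype_prod_eq_prod (ι := Fin N)
      (f := fun i x => f (d i) x * f (d' i) x)]

lemma Qform_pos (hf : ∀ d, MemLp (f d) 2 (volume : Measure (Fin s → ℝ)))
    (hind : ∀ c : Fin M → ℝ,
      (∀ᵐ x ∂(volume : Measure (Fin s → ℝ)), ∑ d, c d * f d x = 0) → c = 0)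
    (B : (Fin N → Fin M) → ℝ) (hB : B ≠ 0) : 0 < Qform s N M f B := by
  have h0 : 0 ≤ Qform s N M f B := by
    rw [← Qform_eq hf B]
    exact integral_nonneg fun X => sq_nonneg _
  rcases h0.lt_or_eq with h | h
  · exact h
  exfalso
  have hzero : ∫ X : Fin N → Fin s → ℝ,
      (∑ d : Fin N → Fin M, B d * ∏ i, f (d i) (X i)) ^ 2 = 0 := by
    rw [Qform_eq hf B]; exact h.symm
  have hae := (integral_eq_zero_iff_of_nonneg (fun X => sq_nonneg _)
    (sq_sum_integrable hf B)).1 hzero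
  have hae2 : ∀ᵐ X ∂(volume : Measure (Fin N → Fin s → ℝ)),
      ∑ d : Fin N → Fin M, B d * ∏ i, f (d i) (X i) = 0 := by
    filter_upwards [hae] with X hX
    exact sq_eq_zero_iff.1 hX
  exact hB (prod_fun_indep f hind N B hae2)

lemma Qform_smul (t : ℝ) (B : (Fin N → Fin M) → ℝ) :
    Qform s N M f (t • B) = t ^ 2 * Qform s N M f B := by
  simp only [Qform, Pi.smul_apply, smul_eq_mul, Finset.mul_sum]
  refine Finset.sum_congr rfl fun d _ => Finset.sum_congr rfl fun d' _ => ?_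
  ring

lemma Qform_continuous : Continuous (Qform s N M f) :=
  continuous_finset_sum _ fun d _ => continuous_finset_sum _ fun d' _ =>
    ((continuous_apply d).mul (continuous_apply d')).mul continuous_const

end Qform

/-- Let `f 1, …, f M ∈ L²(ℝ^s)` be linearly independent, and for a tensor
`A` of order `N = 2n` and dimension `M` in each mode let
`h A (x₁,…,x_N) = ∑_d A d * ∏ i, f (d i) (x i)`.  If `{A λ}` is a family of tensors and `A*`
a target tensor with `rank [A λ] < rank [A*]` for all `λ`, then `h A*` is bounded away from
the family `{h (A λ)}` in `L²`: there is `ε > 0` with `∫ |h (A λ) − h A*|² > ε` for all `λ`. -/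
theorem score_functions_bounded_away (s n M : ℕ)
    (f : Fin M → (Fin s → ℝ) → ℝ)
    (hf : ∀ d, MemLp (f d) 2 (volume : Measure (Fin s → ℝ)))
    (hind : ∀ c : Fin M → ℝ,
      (∀ᵐ x ∂(volume : Measure (Fin s → ℝ)), ∑ d, c d * f d x = 0) → c = 0)
    {Λ : Type*} (Afam : Λ → (Fin (2 * n) → Fin M) → ℝ)
    (Astar : (Fin (2 * n) → Fin M) → ℝ)
    (hrank : ∀ lam : Λ, (matricize (Afam lam)).rank < (matricize Astar).rank) :
    ∃ ε > (0 : ℝ), ∀ lam : Λ,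
      ε < ∫ X : Fin (2 * n) → Fin s → ℝ,
        ((∑ d : Fin (2 * n) → Fin M, Afam lam d * ∏ i, f (d i) (X i)) -
         (∑ d : Fin (2 * n) → Fin M, Astar d * ∏ i, f (d i) (X i))) ^ 2 := by
  classical
  by_cases hΛ : Nonempty Λ
  case neg => exact ⟨1, one_pos, fun lam => absurd ⟨lam⟩ hΛ⟩
  obtain ⟨lam0⟩ := hΛ
  set r := (matricize Astar).rank with hr
  -- the tensor space is nontrivial
  have hAstar : Astar ≠ 0 := by
    intro h
    have h0 : matricize Astar = 0 := by rw [h]; rfl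
    have h1 := hrank lam0
    have h2 : r = 0 := by rw [hr, h0, Matrix.rank_zero]
    omega
  haveI : Nontrivial ((Fin (2 * n) → Fin M) → ℝ) := ⟨⟨Astar, 0, hAstar⟩⟩
  -- the family lies in a closed set avoiding Astar
  set C : Set ((Fin (2 * n) → Fin M) → ℝ) := {A | (matricize A).rank < r} with hC
  have hCclosed : IsClosed C := by
    have hcont : Continuous (fun A : (Fin (2 * n) → Fin M) → ℝ => matricize A) :=
      continuous_pi fun row => continuous_pi fun col => continuous_apply _
    exact (isClosed_matrixRank_lt r).preimage hcont
  have hr1 : 1 ≤ r := lt_of_le_of_lt (Nat.zero_le _) (hrank lam0)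
  have hC0 : (0 : (Fin (2 * n) → Fin M) → ℝ) ∈ C := by
    have h0 : matricize (0 : (Fin (2 * n) → Fin M) → ℝ) = 0 := rfl
    simp only [hC, Set.mem_setOf_eq, h0, Matrix.rank_zero]
    omega
  have hAstarC : Astar ∉ C := by
    simp only [hC, Set.mem_setOf_eq]
    rw [hr]
    exact lt_irrefl _
  set δ := Metric.infDist Astar C with hδdef
  have hδpos : 0 < δ := (hCclosed.notMem_iff_infDist_pos ⟨0, hC0⟩).1 hAstarC
  -- minimum of the quadratic form on the unit sphere
  obtain ⟨B0, hB0mem, hB0min⟩ :=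
    (isCompact_sphere (0 : (Fin (2 * n) → Fin M) → ℝ) 1).exists_isMinOn
      (NormedSpace.sphere_nonempty.2 zero_le_one) (Qform_continuous (f := f)).continuousOn
  have hB0norm : ‖B0‖ = 1 := mem_sphere_zero_iff_norm.1 hB0mem
  have hB0ne : B0 ≠ 0 := by
    intro h; rw [h, norm_zero] at hB0norm; exact one_ne_zero hB0norm.symm
  have hcpos : 0 < Qform s (2 * n) M f B0 := Qform_pos hf hind B0 hB0ne
  set cmin := Qform s (2 * n) M f B0 with hcmin
  have hlow : ∀ B : (Fin (2 * n) → Fin M) → ℝ, cmin * ‖B‖ ^ 2 ≤ Qform s (2 * n) M f B := by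
    intro B
    rcases eq_or_ne B 0 with h | h
    · simp [h, Qform]
    · have hn : ‖B‖ ≠ 0 := norm_ne_zero_iff.2 h
      have hu : (‖B‖⁻¹ • B) ∈ Metric.sphere (0 : (Fin (2 * n) → Fin M) → ℝ) 1 := by
        rw [mem_sphere_zero_iff_norm, norm_smul, norm_inv, norm_norm,
          inv_mul_cancel₀ hn]
      have h1 : cmin ≤ Qform s (2 * n) M f (‖B‖⁻¹ • B) := hB0min hu
      have h2 : Qform s (2 * n) M f (‖B‖⁻¹ • B) = (‖B‖⁻¹) ^ 2 * Qform s (2 * n) M f B :=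
        Qform_smul _ _
      have h3 : cmin * ‖B‖ ^ 2 ≤ ((‖B‖⁻¹) ^ 2 * Qform s (2 * n) M f B) * ‖B‖ ^ 2 := by
        rw [← h2]
        exact mul_le_mul_of_nonneg_right h1 (sq_nonneg _)
      calc cmin * ‖B‖ ^ 2 ≤ ((‖B‖⁻¹) ^ 2 * Qform s (2 * n) M f B) * ‖B‖ ^ 2 := h3
        _ = Qform s (2 * n) M f B := by field_simp
  refine ⟨cmin * δ ^ 2 / 2, by positivity, fun lam => ?_⟩
  set B : (Fin (2 * n) → Fin M) → ℝ := Afam lam - Astar with hB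
  have hBnorm : δ ≤ ‖B‖ := by
    have hmem : Afam lam ∈ C := hrank lam
    have hle := Metric.infDist_le_dist_of_mem (x := Astar) hmem
    rw [dist_eq_norm] at hle
    calc δ ≤ ‖Astar - Afam lam‖ := hle
      _ = ‖B‖ := by rw [hB, norm_sub_rev]
  have hfun : (fun X : Fin (2 * n) → Fin s → ℝ =>
      ((∑ d : Fin (2 * n) → Fin M, Afam lam d * ∏ i, f (d i) (X i)) -
       (∑ d : Fin (2 * n) → Fin M, Astar d * ∏ i, f (d i) (X i))) ^ 2) =
      fun X => (∑ d : Fin (2 * n) → Fin M, B d * ∏ i, f (d i) (X i)) ^ 2 := by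
    funext X
    congr 1
    rw [← Finset.sum_sub_distrib]
    refine Finset.sum_congr rfl fun d _ => ?_
    rw [hB]
    simp [sub_mul]
  rw [hfun, Qform_eq hf B]
  have h1 : cmin * δ ^ 2 ≤ cmin * ‖B‖ ^ 2 :=
    mul_le_mul_of_nonneg_left (pow_le_pow_left₀ hδpos.le hBnorm 2) hcpos.le
  have h2 := hlow B
  have h3 : 0 < cmin * δ ^ 2 := mul_pos hcpos (pow_pos hδpos 2)
  linarith
end
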